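/- Let M be an n×n Hermitian positive-definite complex matrix, let A ⊆ {1,…,n} be nonempty, let K(M,A) = {v ∈ ℂⁿ : v_j = 0 for all j ∉ A, and (M·v)_i = 0 for all i ∉ A}, and let w¹,…,w^K be a basis of K(M,A). Then an n×n complex matrix o supported on A×A satisfies M · o = oᴴ · M if and only if there exist complex numbers α_{μν} (1 ≤ μ,ν ≤ K) with α_{μν} = conj(α_{νμ}) such that o_{ij} = Σ_{μ,ν} α_{μν} · w^μ_i · conj((M·w^ν)_j) for all i, j. -/

import Mathlib

open scoped ComplexOrder Matrix

/-- The kernel of the off-diagonal block `M^{A'A}`: vectors supported on `A` whose image under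
`M` is also supported on `A`. -/
noncomputable def Kspace {n : ℕ} (M : Matrix (Fin n) (Fin n) ℂ) (A : Set (Fin n)) :
    Submodule ℂ (Fin n → ℂ) where
  carrier := {v | (∀ j ∉ A, v j = 0) ∧ ∀ i ∉ A, M.mulVec v i = 0}
  add_mem' := by
    rintro v w ⟨hv1, hv2⟩ ⟨hw1, hw2⟩
    refine ⟨fun j hj => ?_, fun i hi => ?_⟩
    · simp [hv1 j hj, hw1 j hj]
    · simp [Matrix.mulVec_add, hv2 i hi, hw2 i hi]
  zero_mem' := by
    refine ⟨fun j _ => rfl, fun i _ => ?_⟩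
    simp [Matrix.mulVec_zero]
  smul_mem' := by
    rintro c v ⟨hv1, hv2⟩
    refine ⟨fun j hj => ?_, fun i hi => ?_⟩
    · simp [hv1 j hj]
    · simp [Matrix.mulVec_smul, hv2 i hi]

/-- Let `M` be Hermitian positive definite, `A` nonempty, and `w` a basis of
`K(M, A)`. A matrix `o` supported on `A × A` satisfies `M * o = oᴴ * M` if and only if
`o i j = ∑ μ ν, α μ ν * (w μ) i * conj ((M · w ν) j)` for some Hermitian array of coefficients
`α`. -/
theorem stmt_11 (n : ℕ) (M : Matrix (Fin n) (Fin n) ℂ) (hM : M.PosDef)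
    (A : Set (Fin n)) (hA : A.Nonempty) (K : ℕ)
    (w : Module.Basis (Fin K) ℂ (Kspace M A))
    (o : Matrix (Fin n) (Fin n) ℂ)
    (ho : ∀ i j, (i ∉ A ∨ j ∉ A) → o i j = 0) :
    M * o = oᴴ * M ↔
      ∃ α : Fin K → Fin K → ℂ, (∀ μ ν, α μ ν = starRingEnd ℂ (α ν μ)) ∧
        ∀ i j, o i j = ∑ μ, ∑ ν,
          α μ ν * (w μ : Fin n → ℂ) i * starRingEnd ℂ (M.mulVec (w ν : Fin n → ℂ) j) := by
  classical
  set W : Matrix (Fin n) (Fin K) ℂ := Matrix.of fun i μ => (w μ : Fin n → ℂ) i with hWdef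
  have hMW : (M * W)ᴴ = Wᴴ * M := by
    rw [Matrix.conjTranspose_mul, hM.1]
  -- entrywise formula ↔ matrix identity
  have hentry : ∀ a : Matrix (Fin K) (Fin K) ℂ,
      (∀ i j, o i j = ∑ μ, ∑ ν,
          a μ ν * (w μ : Fin n → ℂ) i * starRingEnd ℂ (M.mulVec (w ν : Fin n → ℂ) j))
        ↔ o = W * a * (M * W)ᴴ := by
    intro a
    have hMWapp : ∀ j ν, (M * W) j ν = M.mulVec (w ν : Fin n → ℂ) j := by
      intro j ν; simp [Matrix.mul_apply, Matrix.mulVec, dotProduct, hWdef]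
    constructor
    · intro hf
      ext i j
      rw [hf i j]
      simp only [Matrix.mul_apply, Matrix.conjTranspose_apply, hMWapp, Finset.sum_mul]
      rw [Finset.sum_comm]
      refine Finset.sum_congr rfl fun ν _ => Finset.sum_congr rfl fun μ _ => ?_
      simp only [hWdef, Matrix.of_apply, RCLike.star_def]
      ring
    · intro hf i j
      rw [hf]
      simp only [Matrix.mul_apply, Matrix.conjTranspose_apply, hMWapp, Finset.sum_mul]
      rw [Finset.sum_comm]
      refine Finset.sum_congr rfl fun μ _ => Finset.sum_congr rfl fun ν _ => ?_
      simp only [hWdef, Matrix.of_apply, RCLike.star_def]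
      ring
  -- injectivity of W on vectors
  have hWinj : ∀ x : Fin K → ℂ, W.mulVec x = 0 → x = 0 := by
    intro x hx
    have hsum : (∑ μ, x μ • w μ) = 0 := by
      apply Subtype.coe_injective
      show ((∑ μ, x μ • w μ : Kspace M A) : Fin n → ℂ) = ((0 : Kspace M A) : Fin n → ℂ)
      have hc : ((∑ μ, x μ • w μ : Kspace M A) : Fin n → ℂ)
          = ∑ μ, x μ • ((w μ : Fin n → ℂ)) := by
        push_cast [Submodule.coe_sum]
        rfl
      rw [hc]
      funext i
      have := congrFun hx i
      simpa [Matrix.mulVec, dotProduct, mul_comm, Finset.sum_apply, hWdef] using this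
    have lin := Fintype.linearIndependent_iff.mp w.linearIndependent
    exact funext (lin x hsum)
  set G : Matrix (Fin K) (Fin K) ℂ := Wᴴ * M * W with hGdef
  have hGherm : Gᴴ = G := by
    rw [hGdef, Matrix.conjTranspose_mul, Matrix.conjTranspose_mul,
      Matrix.conjTranspose_conjTranspose, hM.1, Matrix.mul_assoc]
  have hGdet : IsUnit G.det := by
    rw [← Matrix.isUnit_iff_isUnit_det, ← Matrix.mulVec_injective_iff_isUnit]
    have hker : ∀ x : Fin K → ℂ, G.mulVec x = 0 → x = 0 := by
      intro x hx
      refine hWinj x (by_contra fun hne => ?_)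
      have hpos := (Matrix.posDef_iff_dotProduct_mulVec.mp hM).2 hne
      have hz : star x ⬝ᵥ G.mulVec x = star (W.mulVec x) ⬝ᵥ M.mulVec (W.mulVec x) := by
        rw [hGdef, ← Matrix.mulVec_mulVec, ← Matrix.mulVec_mulVec,
          Matrix.dotProduct_mulVec, ← Matrix.star_mulVec]
      rw [hx, dotProduct_zero] at hz
      rw [← hz] at hpos
      exact lt_irrefl 0 hpos
    intro x y hxy
    exact sub_eq_zero.mp (hker (x - y) (by rw [Matrix.mulVec_sub, hxy, sub_self]))
  have hG1 : G⁻¹ * G = 1 := Matrix.nonsing_inv_mul G hGdet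
  have hG2 : G * G⁻¹ = 1 := Matrix.mul_nonsing_inv G hGdet
  constructor
  · intro h
    -- columns of o lie in Kspace
    have vmem : ∀ j, (fun i => o i j) ∈ Kspace M A := by
      intro j
      refine ⟨fun i hi => ho i j (Or.inl hi), fun i hi => ?_⟩
      have h1 : M.mulVec (fun k => o k j) i = (M * o) i j := by
        simp [Matrix.mul_apply, Matrix.mulVec, dotProduct]
      rw [h1, h]
      simp only [Matrix.mul_apply, Matrix.conjTranspose_apply]
      refine Finset.sum_eq_zero fun k _ => ?_
      rw [ho k i (Or.inr hi)]
      simp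
    set C : Matrix (Fin K) (Fin n) ℂ :=
      Matrix.of fun μ j => w.repr ⟨_, vmem j⟩ μ with hCdef
    have hoWC : o = W * C := by
      ext i j
      set vj : Kspace M A := ⟨fun i => o i j, vmem j⟩ with hvj
      have hr := w.sum_repr vj
      calc o i j = ((vj : Fin n → ℂ)) i := rfl
        _ = ((∑ μ, w.repr vj μ • w μ : Kspace M A) : Fin n → ℂ) i := by rw [hr]
        _ = ∑ μ, w.repr vj μ * (w μ : Fin n → ℂ) i := by
            simp [Submodule.coe_sum, Finset.sum_apply, -Module.Basis.sum_repr]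
        _ = (W * C) i j := by
            simp only [Matrix.mul_apply, hWdef, hCdef, Matrix.of_apply]
            exact Finset.sum_congr rfl fun μ _ => mul_comm _ _
    have key1 : G * C = (C * W)ᴴ * (M * W)ᴴ := by
      calc G * C = Wᴴ * (M * o) := by
            rw [hGdef, hoWC]; simp only [Matrix.mul_assoc]
        _ = Wᴴ * (Cᴴ * (Wᴴ * M)) := by
            rw [h, hoWC, Matrix.conjTranspose_mul, Matrix.mul_assoc]
        _ = (C * W)ᴴ * (M * W)ᴴ := by
            rw [Matrix.conjTranspose_mul, hMW, Matrix.mul_assoc]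
    set a : Matrix (Fin K) (Fin K) ℂ := G⁻¹ * (C * W)ᴴ with hadef
    have key2 : a * (M * W)ᴴ = C := by
      rw [hadef, Matrix.mul_assoc, ← key1, ← Matrix.mul_assoc, hG1, Matrix.one_mul]
    have haherm : aᴴ = a := by
      have hGCW : G * (C * W) = (C * W)ᴴ * G := by
        rw [← Matrix.mul_assoc, key1, Matrix.mul_assoc, hMW, ← hGdef]
      have hX : G * ((C * W) * G⁻¹) = (C * W)ᴴ := by
        rw [← Matrix.mul_assoc, hGCW, Matrix.mul_assoc, hG2, Matrix.mul_one]
      have hX2 : (C * W) * G⁻¹ = G⁻¹ * (C * W)ᴴ := by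
        calc (C * W) * G⁻¹ = (G⁻¹ * G) * ((C * W) * G⁻¹) := by rw [hG1, Matrix.one_mul]
          _ = G⁻¹ * (C * W)ᴴ := by rw [Matrix.mul_assoc, hX]
      rw [hadef, Matrix.conjTranspose_mul, Matrix.conjTranspose_conjTranspose,
        Matrix.conjTranspose_nonsing_inv, hGherm, ← hX2]
    refine ⟨fun μ ν => a μ ν, fun μ ν => ?_, ?_⟩
    · have := congrFun (congrFun haherm μ) ν
      rw [Matrix.conjTranspose_apply, RCLike.star_def] at this
      exact this.symm
    · rw [show (fun μ ν => a μ ν) = a from rfl]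
      exact (hentry a).mpr (by rw [Matrix.mul_assoc, key2, hoWC])
  · rintro ⟨α, hherm, hf⟩
    set a : Matrix (Fin K) (Fin K) ℂ := Matrix.of α with hadef
    have haherm : aᴴ = a := by
      ext μ ν
      rw [Matrix.conjTranspose_apply, RCLike.star_def]
      exact (hherm μ ν).symm
    have hoa : o = W * a * (M * W)ᴴ := (hentry a).mp hf
    have hoconj : (W * a * (M * W)ᴴ)ᴴ = (M * W) * (a * Wᴴ) := by
      rw [Matrix.conjTranspose_mul (W * a) ((M * W)ᴴ), Matrix.conjTranspose_conjTranspose,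
        Matrix.conjTranspose_mul W a, haherm]
    rw [hoa, hoconj, hMW]
    simp only [Matrix.mul_assoc]
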